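/- Let K be a field, n ≥ 1, and A, B, A', B' : Matrix (Fin n) (Fin n) K. Suppose A * X * B = A' * X * B' for every X : Matrix (Fin n) (Fin n) K, and that there exists X₀ with A * X₀ * B ≠ 0. Then there exists ρ ∈ K with ρ ≠ 0 such that A' = ρ • A and B' = ρ⁻¹ • B. -/
import Mathlib


theorem stmt_8 {K : Type*} [Field K] {n : ℕ} (hn : 1 ≤ n)
    (A B A' B' : Matrix (Fin n) (Fin n) K)
    (h : ∀ X : Matrix (Fin n) (Fin n) K, A * X * B = A' * X * B')
    (hne : ∃ X₀ : Matrix (Fin n) (Fin n) K, A * X₀ * B ≠ 0) :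
    ∃ ρ : K, ρ ≠ 0 ∧ A' = ρ • A ∧ B' = ρ⁻¹ • B := by
  have key : ∀ i j k l, A k i * B j l = A' k i * B' j l := by
    intro i j k l
    have := congrFun (congrFun (h (Matrix.single i j 1)) k) l
    simpa [Matrix.mul_apply, Matrix.single, ite_and, mul_ite, ite_mul,
      Finset.sum_ite_eq, Finset.sum_ite_eq'] using this
  obtain ⟨X₀, hX⟩ := hne
  have hentry : ∃ k l, (A * X₀ * B) k l ≠ 0 := by
    by_contra hc
    push_neg at hc
    exact hX (by ext k l; exact hc k l)
  obtain ⟨k₀, l₀, hkl⟩ := hentry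
  have hsum : (A * X₀ * B) k₀ l₀ = ∑ i, ∑ j, A k₀ i * X₀ i j * B j l₀ := by
    simp only [Matrix.mul_apply, Finset.sum_mul]
    rw [Finset.sum_comm]
  rw [hsum] at hkl
  obtain ⟨i₀, -, hi⟩ := Finset.exists_ne_zero_of_sum_ne_zero hkl
  obtain ⟨j₀, -, hj⟩ := Finset.exists_ne_zero_of_sum_ne_zero hi
  have hA : A k₀ i₀ ≠ 0 := fun h0 => hj (by simp [h0])
  have hB : B j₀ l₀ ≠ 0 := fun h0 => hj (by simp [h0])
  have hbase := key i₀ j₀ k₀ l₀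
  have hA' : A' k₀ i₀ ≠ 0 := by
    intro h0
    rw [h0, zero_mul] at hbase
    exact mul_ne_zero hA hB hbase
  have hB' : B' j₀ l₀ ≠ 0 := by
    intro h0
    rw [h0, mul_zero] at hbase
    exact mul_ne_zero hA hB hbase
  refine ⟨A' k₀ i₀ / A k₀ i₀, div_ne_zero hA' hA, ?_, ?_⟩
  · ext k i
    have h1 := key i j₀ k l₀
    have cross : A k i * A' k₀ i₀ * B' j₀ l₀ = A k₀ i₀ * A' k i * B' j₀ l₀ := by
      linear_combination A k₀ i₀ * h1 - A k i * hbase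
    have h3 : A k i * A' k₀ i₀ = A k₀ i₀ * A' k i := mul_right_cancel₀ hB' cross
    simp only [Matrix.smul_apply, smul_eq_mul]
    field_simp
    linear_combination -h3
  · ext j l
    have h1 := key i₀ j k₀ l
    simp only [Matrix.smul_apply, smul_eq_mul]
    rw [inv_div]
    field_simp
    linear_combination -h1
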